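/- Let X, Y be integrable random variables with distribution functions F_X, F_Y. Suppose there exists t₀ ∈ ℝ such that F_X(t) ≤ F_Y(t) for all t < t₀ and F_X(t) ≥ F_Y(t) for all t ≥ t₀ (single crossing), and E[X] ≤ E[Y]. Then X ≤_icx Y. -/

import Mathlib

open MeasureTheory ProbabilityTheory Set

noncomputable section

variable {Ω Ω' : Type*} [MeasurableSpace Ω] [MeasurableSpace Ω']

/-- Distribution function of a random variable. -/
def distFun (μ : Measure Ω) (X : Ω → ℝ) (x : ℝ) : ℝ := (μ {ω | X ω ≤ x}).toReal

/-- Value-at-Risk at level α: `VaR_α(X) = inf {x | F_X(x) ≥ 1-α}`. -/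
def VaR (μ : Measure Ω) (X : Ω → ℝ) (α : ℝ) : ℝ := sInf {x | 1 - α ≤ distFun μ X x}

/-- Range-Value-at-Risk with parameters α, β (for β > 0). -/
def RVaR (μ : Measure Ω) (X : Ω → ℝ) (α β : ℝ) : ℝ := (1/β) * ∫ s in α..(α+β), VaR μ X s

/-- Usual stochastic order. -/
def le_st (μ : Measure Ω) (X : Ω → ℝ) (ν : Measure Ω') (Y : Ω' → ℝ) : Prop :=
  ∀ f : ℝ → ℝ, Monotone f → Integrable (fun ω => f (X ω)) μ →
    Integrable (fun ω => f (Y ω)) ν → ∫ ω, f (X ω) ∂μ ≤ ∫ ω, f (Y ω) ∂ν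

/-- Convex order. -/
def le_cx (μ : Measure Ω) (X : Ω → ℝ) (ν : Measure Ω') (Y : Ω' → ℝ) : Prop :=
  ∀ f : ℝ → ℝ, ConvexOn ℝ univ f → Integrable (fun ω => f (X ω)) μ →
    Integrable (fun ω => f (Y ω)) ν → ∫ ω, f (X ω) ∂μ ≤ ∫ ω, f (Y ω) ∂ν

/-- Increasing convex order. -/
def le_icx (μ : Measure Ω) (X : Ω → ℝ) (ν : Measure Ω') (Y : Ω' → ℝ) : Prop :=
  ∀ f : ℝ → ℝ, Monotone f → ConvexOn ℝ univ f → Integrable (fun ω => f (X ω)) μ →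
    Integrable (fun ω => f (Y ω)) ν → ∫ ω, f (X ω) ∂μ ≤ ∫ ω, f (Y ω) ∂ν

/-- Admissible ceded loss functions: `0 ≤ f(x) ≤ x` with both `f` and the
retained loss `x - f(x)` increasing. -/
def Ceded (f : ℝ → ℝ) : Prop :=
  Monotone f ∧ Monotone (fun x => x - f x) ∧ ∀ x, 0 ≤ x → 0 ≤ f x ∧ f x ≤ x

/-- Layer reinsurance treaty with deductible `a` and upper bound `b`. -/
def layer (a b x : ℝ) : ℝ := min (max (x - a) 0) b

/-- Joint distribution function of a random vector. -/
def jointCDF {n : ℕ} (μ : Measure Ω) (X : Fin n → Ω → ℝ) (x : Fin n → ℝ) : ℝ :=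
  (μ {ω | ∀ i, X i ω ≤ x i}).toReal

/-- All one-dimensional marginals are uniform on [0,1]. -/
def uniformMarginals {n : ℕ} (ν : Measure (Fin n → ℝ)) : Prop :=
  ∀ i, Measure.map (fun u => u i) ν = volume.restrict (Icc (0:ℝ) 1)

/-- `C` is (the distribution function of) an `n`-dimensional copula. -/
def IsCopula {n : ℕ} (C : (Fin n → ℝ) → ℝ) : Prop :=
  ∃ ν : Measure (Fin n → ℝ), IsProbabilityMeasure ν ∧ uniformMarginals ν ∧
    ∀ x, C x = (ν {u | ∀ i, u i ≤ x i}).toReal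

/-- `C` is a copula of the random vector `X`. -/
def HasCopula {n : ℕ} (μ : Measure Ω) (X : Fin n → Ω → ℝ) (C : (Fin n → ℝ) → ℝ) : Prop :=
  IsCopula C ∧ ∀ x : Fin n → ℝ, jointCDF μ X x = C (fun i => distFun μ (X i) (x i))

/-- Positively dependent through the stochastic ordering: for each `i`,
`E[f(X_{-i}) | X_i = x]` is increasing in `x` for every componentwise increasing `f`
(not depending on coordinate `i`). -/
def PDS {n : ℕ} (μ : Measure Ω) (X : Fin n → Ω → ℝ) : Prop :=
  ∀ i : Fin n, ∀ f : (Fin n → ℝ) → ℝ, Monotone f →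
    (∀ a b : Fin n → ℝ, (∀ j, j ≠ i → a j = b j) → f a = f b) →
    ∃ g : ℝ → ℝ, Monotone g ∧
      (μ[(fun ω => f (fun j => X j ω)) | MeasurableSpace.comap (X i) (borel ℝ)]
        =ᵐ[μ] fun ω => g (X i ω))

/-- `C` is a PDS copula. -/
def IsPDSCopula {n : ℕ} (C : (Fin n → ℝ) → ℝ) : Prop :=
  ∃ ν : Measure (Fin n → ℝ), IsProbabilityMeasure ν ∧ uniformMarginals ν ∧
    (∀ x, C x = (ν {u | ∀ i, u i ≤ x i}).toReal) ∧ PDS ν (fun i u => u i)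

/-- Positive orthant dependence. -/
def POD {n : ℕ} (μ : Measure Ω) (X : Fin n → Ω → ℝ) : Prop :=
  ∀ x : Fin n → ℝ,
    (∏ i, (μ {ω | X i ω ≤ x i}).toReal) ≤ (μ {ω | ∀ i, X i ω ≤ x i}).toReal ∧
    (∏ i, (μ {ω | x i < X i ω}).toReal) ≤ (μ {ω | ∀ i, x i < X i ω}).toReal

/-- A comonotone random vector. -/
def Comonotone {m : ℕ} (Z : Fin m → Ω → ℝ) : Prop :=
  ∀ i j ω ω', 0 ≤ (Z i ω - Z i ω') * (Z j ω - Z j ω')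

section Aux

variable (μ : Measure Ω) (ν : Measure Ω') [IsProbabilityMeasure μ] [IsProbabilityMeasure ν]
  (X : Ω → ℝ) (Y : Ω' → ℝ) (t₀ : ℝ)

lemma sc_aux_Iic
    (hbelow : ∀ t < t₀, (μ {ω | X ω ≤ t}).toReal ≤ (ν {ω | Y ω ≤ t}).toReal) :
    ∀ t < t₀, μ (X ⁻¹' Iic t) ≤ ν (Y ⁻¹' Iic t) := by
  intro t ht
  have h := hbelow t ht
  rwa [ENNReal.toReal_le_toReal (measure_ne_top _ _) (measure_ne_top _ _)] at h

lemma sc_aux_Iio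
    (hbelow : ∀ t < t₀, (μ {ω | X ω ≤ t}).toReal ≤ (ν {ω | Y ω ≤ t}).toReal) :
    ∀ a ≤ t₀, μ (X ⁻¹' Iio a) ≤ ν (Y ⁻¹' Iio a) := by
  intro a ha
  have hU : X ⁻¹' Iio a = ⋃ n : ℕ, X ⁻¹' Iic (a - 1/(n+1)) := by
    ext ω
    simp only [mem_preimage, mem_Iio, mem_iUnion, mem_Iic]
    constructor
    · intro h
      obtain ⟨n, hn⟩ := exists_nat_one_div_lt (sub_pos.mpr h)
      exact ⟨n, by push_cast at hn ⊢; linarith⟩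
    · rintro ⟨n, hn⟩
      have h0 : (0:ℝ) < 1/(n+1) := by positivity
      linarith
  have hmono : Monotone fun n : ℕ => X ⁻¹' Iic (a - 1/(n+1)) := by
    intro n m hnm
    apply preimage_mono
    apply Iic_subset_Iic.mpr
    have : (1:ℝ)/(m+1) ≤ 1/(n+1) := by
      apply one_div_le_one_div_of_le (by positivity)
      push_cast; exact_mod_cast Nat.succ_le_succ hnm
    linarith
  rw [hU, hmono.measure_iUnion]
  apply iSup_le
  intro n
  have h1 : (1:ℝ)/(n+1) > 0 := by positivity
  calc μ (X ⁻¹' Iic (a - 1/(n+1))) ≤ ν (Y ⁻¹' Iic (a - 1/(n+1))) :=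
        sc_aux_Iic μ ν X Y t₀ hbelow _ (by linarith)
    _ ≤ ν (Y ⁻¹' Iio a) := by
        apply measure_mono
        apply preimage_mono
        intro x hx
        simp only [mem_Iic] at hx
        simp only [mem_Iio]
        linarith

lemma sc_aux_Ioi (hXm : Measurable X) (hYm : Measurable Y)
    (habove : ∀ t ≥ t₀, (ν {ω | Y ω ≤ t}).toReal ≤ (μ {ω | X ω ≤ t}).toReal) :
    ∀ t ≥ t₀, μ (X ⁻¹' Ioi t) ≤ ν (Y ⁻¹' Ioi t) := by
  intro t ht
  have h := habove t ht
  rw [ENNReal.toReal_le_toReal (measure_ne_top _ _) (measure_ne_top _ _)] at h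
  have hX' : X ⁻¹' Ioi t = (X ⁻¹' Iic t)ᶜ := by
    rw [← preimage_compl, compl_Iic]
  have hY' : Y ⁻¹' Ioi t = (Y ⁻¹' Iic t)ᶜ := by
    rw [← preimage_compl, compl_Iic]
  rw [hX', hY', measure_compl (hXm measurableSet_Iic) (measure_ne_top _ _),
    measure_compl (hYm measurableSet_Iic) (measure_ne_top _ _),
    measure_univ, measure_univ]
  exact tsub_le_tsub_left h 1

lemma sc_aux_Ici (hXm : Measurable X) (hYm : Measurable Y)
    (habove : ∀ t ≥ t₀, (ν {ω | Y ω ≤ t}).toReal ≤ (μ {ω | X ω ≤ t}).toReal) :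
    ∀ b > t₀, μ (X ⁻¹' Ici b) ≤ ν (Y ⁻¹' Ici b) := by
  intro b hb
  set c : ℕ → ℝ := fun n => max ((t₀ + b)/2) (b - 1/(n+1)) with hc
  have hct₀ : ∀ n, t₀ ≤ c n := fun n => le_trans (by linarith) (le_max_left _ _)
  have hcb : ∀ n, c n < b := by
    intro n
    apply max_lt (by linarith)
    have : (0:ℝ) < 1/(n+1) := by positivity
    linarith
  have hcmono : Monotone c := by
    intro n m hnm
    apply max_le_max le_rfl
    have : (1:ℝ)/(m+1) ≤ 1/(n+1) := by
      apply one_div_le_one_div_of_le (by positivity)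
      push_cast; exact_mod_cast Nat.succ_le_succ hnm
    linarith
  have hIic : Ici b = ⋂ n : ℕ, Ioi (c n) := by
    ext x
    simp only [mem_Ici, mem_iInter, mem_Ioi]
    constructor
    · intro h n; exact lt_of_lt_of_le (hcb n) h
    · intro h
      by_contra hxb
      push_neg at hxb
      obtain ⟨n, hn⟩ := exists_nat_one_div_lt (sub_pos.mpr hxb)
      have : b - 1/(n+1) ≤ c n := le_max_right _ _
      have h2 := h n
      push_cast at hn
      linarith
  have hanti : Antitone fun n : ℕ => Y ⁻¹' Ioi (c n) := by
    intro n m hnm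
    exact preimage_mono (Ioi_subset_Ioi (hcmono hnm))
  have hνeq : ν (Y ⁻¹' Ici b) = ⨅ n, ν (Y ⁻¹' Ioi (c n)) := by
    rw [hIic, preimage_iInter]
    exact hanti.measure_iInter (fun n => (hYm measurableSet_Ioi).nullMeasurableSet)
      ⟨0, measure_ne_top _ _⟩
  rw [hνeq]
  apply le_iInf
  intro n
  calc μ (X ⁻¹' Ici b) ≤ μ (X ⁻¹' Ioi (c n)) :=
        measure_mono (preimage_mono (fun x hx => lt_of_lt_of_le (hcb n) hx))
    _ ≤ ν (Y ⁻¹' Ioi (c n)) := sc_aux_Ioi μ ν X Y t₀ hXm hYm habove _ (hct₀ n)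


lemma sc_lower
    (hbelow : ∀ t < t₀, (μ {ω | X ω ≤ t}).toReal ≤ (ν {ω | Y ω ≤ t}).toReal)
    (S : Set ℝ) (hlow : ∀ x y : ℝ, x ≤ y → y ∈ S → x ∈ S) (hsub : S ⊆ Iio t₀) :
    MeasurableSet S ∧ μ (X ⁻¹' S) ≤ ν (Y ⁻¹' S) := by
  rcases eq_empty_or_nonempty S with rfl | hne
  · simp
  have hbdd : BddAbove S := ⟨t₀, fun x hx => (hsub hx).le⟩
  set a := sSup S with ha
  by_cases haS : a ∈ S
  · have hSa : S = Iic a := by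
      ext x
      constructor
      · intro hx; exact le_csSup hbdd hx
      · intro hx; exact hlow x a hx haS
    rw [hSa]
    exact ⟨measurableSet_Iic, sc_aux_Iic μ ν X Y t₀ hbelow a (hsub haS)⟩
  · have hSa : S = Iio a := by
      ext x
      constructor
      · intro hx
        rcases lt_or_eq_of_le (le_csSup hbdd hx) with h | h
        · exact h
        · exact absurd (by rwa [h] at hx) haS
      · intro hx
        obtain ⟨z, hz, hxz⟩ := exists_lt_of_lt_csSup hne hx
        exact hlow x z hxz.le hz
    have hat₀ : a ≤ t₀ := csSup_le hne (fun x hx => (hsub hx).le)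
    rw [hSa]
    exact ⟨measurableSet_Iio, sc_aux_Iio μ ν X Y t₀ hbelow a hat₀⟩

lemma sc_upper (hXm : Measurable X) (hYm : Measurable Y)
    (habove : ∀ t ≥ t₀, (ν {ω | Y ω ≤ t}).toReal ≤ (μ {ω | X ω ≤ t}).toReal)
    (T : Set ℝ) (hup : ∀ x y : ℝ, x ≤ y → x ∈ T → y ∈ T) (hsub : T ⊆ Ioi t₀) :
    MeasurableSet T ∧ μ (X ⁻¹' T) ≤ ν (Y ⁻¹' T) := by
  rcases eq_empty_or_nonempty T with rfl | hne
  · simp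
  have hbdd : BddBelow T := ⟨t₀, fun x hx => (hsub hx).le⟩
  set b := sInf T with hb
  by_cases hbT : b ∈ T
  · have hTb : T = Ici b := by
      ext x
      constructor
      · intro hx; exact csInf_le hbdd hx
      · intro hx; exact hup b x hx hbT
    rw [hTb]
    exact ⟨measurableSet_Ici, sc_aux_Ici μ ν X Y t₀ hXm hYm habove b (hsub hbT)⟩
  · have hTb : T = Ioi b := by
      ext x
      constructor
      · intro hx
        rcases lt_or_eq_of_le (csInf_le hbdd hx) with h | h
        · exact h
        · exact absurd (by rwa [← h] at hx) hbT
      · intro hx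
        obtain ⟨z, hz, hxz⟩ := exists_lt_of_csInf_lt hne hx
        exact hup z x hxz.le hz
    have hbt₀ : t₀ ≤ b := le_csInf hne (fun x hx => (hsub hx).le)
    rw [hTb]
    exact ⟨measurableSet_Ioi, sc_aux_Ioi μ ν X Y t₀ hXm hYm habove b hbt₀⟩

end Aux

/-- single crossing of the distribution functions together with ordered
means implies the increasing convex order. -/
theorem single_crossing_implies_le_icx
    (μ : Measure Ω) (ν : Measure Ω') [IsProbabilityMeasure μ] [IsProbabilityMeasure ν]
    (X : Ω → ℝ) (Y : Ω' → ℝ) (hXm : Measurable X) (hYm : Measurable Y)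
    (hX : Integrable X μ) (hY : Integrable Y ν)
    (t₀ : ℝ)
    (hbelow : ∀ t < t₀, distFun μ X t ≤ distFun ν Y t)
    (habove : ∀ t ≥ t₀, distFun ν Y t ≤ distFun μ X t)
    (hmean : ∫ ω, X ω ∂μ ≤ ∫ ω, Y ω ∂ν) :
    le_icx μ X ν Y := by
  intro f hfmono hfc hfX hfY
  have hbelow' : ∀ t < t₀, (μ {ω | X ω ≤ t}).toReal ≤ (ν {ω | Y ω ≤ t}).toReal := hbelow
  have habove' : ∀ t ≥ t₀, (ν {ω | Y ω ≤ t}).toReal ≤ (μ {ω | X ω ≤ t}).toReal := habove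
  -- the supporting slope at t₀
  set Sl : Set ℝ := (fun x => (f t₀ - f x) / (t₀ - x)) '' Iio t₀ with hSldef
  have hmem1 : (f t₀ - f (t₀ - 1)) / (t₀ - (t₀ - 1)) ∈ Sl :=
    ⟨t₀ - 1, by simp only [mem_Iio]; linarith, rfl⟩
  have hne : Sl.Nonempty := ⟨_, hmem1⟩
  have hbdd : BddAbove Sl := by
    refine ⟨(f (t₀ + 1) - f t₀) / (t₀ + 1 - t₀), ?_⟩
    rintro s ⟨x, hx, rfl⟩
    exact hfc.slope_mono_adjacent (mem_univ x) (mem_univ (t₀ + 1)) hx (by linarith)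
  set c : ℝ := sSup Sl with hcdef
  have hc0 : 0 ≤ c := by
    have hs0 : 0 ≤ (f t₀ - f (t₀ - 1)) / (t₀ - (t₀ - 1)) :=
      div_nonneg (sub_nonneg.mpr (hfmono (by linarith))) (by linarith)
    exact hs0.trans (le_csSup hbdd hmem1)
  have hsupp : ∀ x, f t₀ + c * (x - t₀) ≤ f x := by
    intro x
    rcases lt_trichotomy x t₀ with hx | hx | hx
    · have h1 : (f t₀ - f x) / (t₀ - x) ≤ c := le_csSup hbdd ⟨x, hx, rfl⟩
      rw [div_le_iff₀ (by linarith : (0:ℝ) < t₀ - x)] at h1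
      nlinarith
    · simp [hx]
    · have h1 : c ≤ (f x - f t₀) / (x - t₀) := by
        apply csSup_le hne
        rintro s ⟨y, hy, rfl⟩
        exact hfc.slope_mono_adjacent (mem_univ y) (mem_univ x) hy hx
      rw [le_div_iff₀ (by linarith : (0:ℝ) < x - t₀)] at h1
      nlinarith
  -- the nonnegative convex remainder φ
  set φ : ℝ → ℝ := fun x => f x - (f t₀ + c * (x - t₀)) with hφdef
  have hφnn : ∀ x, 0 ≤ φ x := fun x => sub_nonneg.mpr (hsupp x)
  have hφt₀ : φ t₀ = 0 := by simp [hφdef]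
  have hconvφ : ConvexOn ℝ univ φ := by
    refine ⟨convex_univ, fun x _ y _ a b ha hb hab => ?_⟩
    have h1 := hfc.2 (mem_univ x) (mem_univ y) ha hb hab
    simp only [hφdef, smul_eq_mul] at h1 ⊢
    have e : a * (f t₀ + c * (x - t₀)) + b * (f t₀ + c * (y - t₀))
        = f t₀ + c * ((a * x + b * y) - t₀) := by
      linear_combination (f t₀ - c * t₀) * hab
    linarith
  have hanti : ∀ x y : ℝ, x ≤ y → y ≤ t₀ → φ y ≤ φ x := by
    intro x y hxy hyt
    have hy : y ∈ segment ℝ x t₀ := by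
      rw [segment_eq_Icc (hxy.trans hyt)]; exact ⟨hxy, hyt⟩
    have h1 := hconvφ.le_on_segment (mem_univ x) (mem_univ t₀) hy
    rw [hφt₀] at h1
    exact h1.trans_eq (max_eq_left (hφnn x))
  have hmono' : ∀ x y : ℝ, t₀ ≤ x → x ≤ y → φ x ≤ φ y := by
    intro x y hxt hxy
    have hy : x ∈ segment ℝ t₀ y := by
      rw [segment_eq_Icc (hxt.trans hxy)]; exact ⟨hxt, hxy⟩
    have h1 := hconvφ.le_on_segment (mem_univ t₀) (mem_univ y) hy
    rw [hφt₀] at h1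
    exact h1.trans_eq (max_eq_right (hφnn y))
  -- integrability
  have hgX : Integrable (fun ω => f t₀ + c * (X ω - t₀)) μ :=
    (integrable_const _).add ((hX.sub (integrable_const _)).const_mul c)
  have hgY : Integrable (fun ω => f t₀ + c * (Y ω - t₀)) ν :=
    (integrable_const _).add ((hY.sub (integrable_const _)).const_mul c)
  have hφX : Integrable (fun ω => φ (X ω)) μ := hfX.sub hgX
  have hφY : Integrable (fun ω => φ (Y ω)) ν := hfY.sub hgY
  -- key superlevel comparison
  have key : ∀ u ∈ Ioi (0:ℝ), μ {ω | u < φ (X ω)} ≤ ν {ω | u < φ (Y ω)} := by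
    intro u hu
    simp only [mem_Ioi] at hu
    set S : Set ℝ := {x | x < t₀ ∧ u < φ x} with hSdef
    set T : Set ℝ := {x | t₀ < x ∧ u < φ x} with hTdef
    have hAmem : ∀ x : ℝ, u < φ x ↔ x ∈ S ∪ T := by
      intro x
      constructor
      · intro hx
        rcases lt_trichotomy x t₀ with h1 | h1 | h1
        · exact Or.inl ⟨h1, hx⟩
        · exact absurd hx (by rw [h1, hφt₀]; exact not_lt.mpr hu.le)
        · exact Or.inr ⟨h1, hx⟩
      · rintro (⟨_, hx⟩ | ⟨_, hx⟩) <;> exact hx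
    have hAX : {ω | u < φ (X ω)} = X ⁻¹' (S ∪ T) := by
      ext ω; exact hAmem (X ω)
    have hAY : {ω | u < φ (Y ω)} = Y ⁻¹' (S ∪ T) := by
      ext ω; exact hAmem (Y ω)
    obtain ⟨hSmeas, hSle⟩ := sc_lower μ ν X Y t₀ hbelow' S
      (fun x y hxy hy => ⟨lt_of_le_of_lt hxy hy.1, lt_of_lt_of_le hy.2 (hanti x y hxy hy.1.le)⟩)
      (fun x hx => hx.1)
    obtain ⟨hTmeas, hTle⟩ := sc_upper μ ν X Y t₀ hXm hYm habove' T
      (fun x y hxy hx => ⟨lt_of_lt_of_le hx.1 hxy, lt_of_lt_of_le hx.2 (hmono' x y hx.1.le hxy)⟩)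
      (fun x hx => hx.1)
    have hdST : Disjoint S T :=
      Set.disjoint_left.mpr (fun x hx hx' => absurd hx'.1 (not_lt.mpr hx.1.le))
    calc μ {ω | u < φ (X ω)} = μ (X ⁻¹' S ∪ X ⁻¹' T) := by rw [hAX, preimage_union]
      _ ≤ μ (X ⁻¹' S) + μ (X ⁻¹' T) := measure_union_le _ _
      _ ≤ ν (Y ⁻¹' S) + ν (Y ⁻¹' T) := add_le_add hSle hTle
      _ = ν (Y ⁻¹' S ∪ Y ⁻¹' T) := (measure_union (hdST.preimage Y) (hYm hTmeas)).symm
      _ = ν {ω | u < φ (Y ω)} := by rw [hAY, preimage_union]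
  -- layer cake comparison of the φ-integrals
  have hnnX : 0 ≤ᵐ[μ] fun ω => φ (X ω) := ae_of_all _ (fun ω => hφnn (X ω))
  have hnnY : 0 ≤ᵐ[ν] fun ω => φ (Y ω) := ae_of_all _ (fun ω => hφnn (Y ω))
  have hLX : ∫⁻ ω, ENNReal.ofReal (φ (X ω)) ∂μ = ∫⁻ t in Ioi 0, μ {a | t < φ (X a)} :=
    lintegral_eq_lintegral_meas_lt μ hnnX hφX.aemeasurable
  have hLY : ∫⁻ ω, ENNReal.ofReal (φ (Y ω)) ∂ν = ∫⁻ t in Ioi 0, ν {a | t < φ (Y a)} :=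
    lintegral_eq_lintegral_meas_lt ν hnnY hφY.aemeasurable
  have hmeasg : Measurable fun t : ℝ => ν {a | t < φ (Y a)} :=
    Antitone.measurable (fun s t hst => measure_mono (fun a ha => lt_of_le_of_lt hst ha))
  have hfinY : ∫⁻ ω, ENNReal.ofReal (φ (Y ω)) ∂ν ≠ ⊤ := hφY.lintegral_lt_top.ne
  have hIφ : ∫ ω, φ (X ω) ∂μ ≤ ∫ ω, φ (Y ω) ∂ν := by
    rw [integral_eq_lintegral_of_nonneg_ae hnnX hφX.aestronglyMeasurable,
      integral_eq_lintegral_of_nonneg_ae hnnY hφY.aestronglyMeasurable]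
    apply ENNReal.toReal_mono hfinY
    rw [hLX, hLY]
    exact setLIntegral_mono hmeasg key
  -- assembling
  have hXint : ∫ ω, (f t₀ + c * (X ω - t₀)) ∂μ = f t₀ + c * ((∫ ω, X ω ∂μ) - t₀) := by
    have h1 : (fun ω => f t₀ + c * (X ω - t₀)) = fun ω => c * X ω + (f t₀ - c * t₀) := by
      funext ω; ring
    rw [h1, integral_add (hX.const_mul c) (integrable_const _), integral_const_mul,
      integral_const, probReal_univ]
    simp only [ENNReal.toReal_one, one_smul]
    ring
  have hYint : ∫ ω, (f t₀ + c * (Y ω - t₀)) ∂ν = f t₀ + c * ((∫ ω, Y ω ∂ν) - t₀) := by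
    have h1 : (fun ω => f t₀ + c * (Y ω - t₀)) = fun ω => c * Y ω + (f t₀ - c * t₀) := by
      funext ω; ring
    rw [h1, integral_add (hY.const_mul c) (integrable_const _), integral_const_mul,
      integral_const, probReal_univ]
    simp only [ENNReal.toReal_one, one_smul]
    ring
  have hsplitX : ∫ ω, φ (X ω) ∂μ = ∫ ω, f (X ω) ∂μ - ∫ ω, (f t₀ + c * (X ω - t₀)) ∂μ :=
    integral_sub hfX hgX
  have hsplitY : ∫ ω, φ (Y ω) ∂ν = ∫ ω, f (Y ω) ∂ν - ∫ ω, (f t₀ + c * (Y ω - t₀)) ∂ν :=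
    integral_sub hfY hgY
  have hcmean : c * ((∫ ω, X ω ∂μ) - t₀) ≤ c * ((∫ ω, Y ω ∂ν) - t₀) :=
    mul_le_mul_of_nonneg_left (by linarith) hc0
  linarith [hIφ, hsplitX, hsplitY, hXint, hYint, hcmean]
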